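/- Under the same P₁-action on ℝ⁵, every nonzero vector with v₄ = v₅ = 0 and v₃ ≠ 0 can be mapped to e₃ = (0,0,1,0,0), and every nonzero vector with v₃ = v₄ = v₅ = 0 can be mapped to e₁ = (1,0,0,0,0). -/

import Mathlib

/-- The unipotent action of exp(𝔭₊) on 𝔪 ≅ ℝ⁵ (coordinates v₁,…,v₅ = indices 0,…,4). -/
noncomputable def rhoAct (s1 s2 s3 : ℝ) (v : Fin 5 → ℝ) : Fin 5 → ℝ :=
  ![v 0 - s2 * v 2 + (s3 - s1 * s2) * v 3 - (1/2) * s2^2 * v 4,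
    v 1 + s1 * v 2 + (1/2) * s1^2 * v 3 + (s3 + s1 * s2) * v 4,
    v 2 + s1 * v 3 + s2 * v 4,
    v 3,
    v 4]

/-- The graded GL₂-action on 𝔪 for A = [[a,b],[c,d]]. -/
noncomputable def glAct (a b c d : ℝ) (v : Fin 5 → ℝ) : Fin 5 → ℝ :=
  ![a * v 0 + b * v 1,
    c * v 0 + d * v 1,
    (a * d - b * c) * v 2,
    (a * d - b * c) * (a * v 3 + b * v 4),
    (a * d - b * c) * (c * v 3 + d * v 4)]

/-- The set of generators of the P₁-action: unipotent elements and GL₂ elements. -/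
noncomputable def P1gens : Set ((Fin 5 → ℝ) ≃ₗ[ℝ] (Fin 5 → ℝ)) :=
  {f | (∃ s1 s2 s3 : ℝ, ∀ v, f v = rhoAct s1 s2 s3 v) ∨
       (∃ a b c d : ℝ, a * d - b * c ≠ 0 ∧ ∀ v, f v = glAct a b c d v)}

/-- Inverse of the unipotent action. -/
noncomputable def rhoInvAct (s1 s2 s3 : ℝ) (w : Fin 5 → ℝ) : Fin 5 → ℝ :=
  ![w 0 + s2 * w 2 - s3 * w 3 - (1/2) * s2^2 * w 4,
    w 1 - s1 * w 2 + (1/2) * s1^2 * w 3 - s3 * w 4,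
    w 2 - s1 * w 3 - s2 * w 4,
    w 3,
    w 4]

noncomputable def rhoLM (s1 s2 s3 : ℝ) : (Fin 5 → ℝ) →ₗ[ℝ] (Fin 5 → ℝ) where
  toFun := rhoAct s1 s2 s3
  map_add' x y := by funext i; fin_cases i <;> simp [rhoAct] <;> ring
  map_smul' c x := by funext i; fin_cases i <;> simp [rhoAct] <;> ring

noncomputable def rhoInvLM (s1 s2 s3 : ℝ) : (Fin 5 → ℝ) →ₗ[ℝ] (Fin 5 → ℝ) where
  toFun := rhoInvAct s1 s2 s3
  map_add' x y := by funext i; fin_cases i <;> simp [rhoInvAct] <;> ring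
  map_smul' c x := by funext i; fin_cases i <;> simp [rhoInvAct] <;> ring

@[simp] lemma rhoLM_apply (s1 s2 s3 : ℝ) (v : Fin 5 → ℝ) :
    rhoLM s1 s2 s3 v = rhoAct s1 s2 s3 v := rfl

@[simp] lemma rhoInvLM_apply (s1 s2 s3 : ℝ) (v : Fin 5 → ℝ) :
    rhoInvLM s1 s2 s3 v = rhoInvAct s1 s2 s3 v := rfl

noncomputable def rhoE (s1 s2 s3 : ℝ) : (Fin 5 → ℝ) ≃ₗ[ℝ] (Fin 5 → ℝ) :=
  LinearEquiv.ofLinear (rhoLM s1 s2 s3) (rhoInvLM s1 s2 s3)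
    (by
      apply LinearMap.ext; intro v; funext i
      fin_cases i <;> simp [rhoAct, rhoInvAct] <;> ring)
    (by
      apply LinearMap.ext; intro v; funext i
      fin_cases i <;> simp [rhoAct, rhoInvAct] <;> ring)

@[simp] lemma rhoE_apply (s1 s2 s3 : ℝ) (v : Fin 5 → ℝ) :
    rhoE s1 s2 s3 v = rhoAct s1 s2 s3 v := rfl

noncomputable def glLM (a b c d : ℝ) : (Fin 5 → ℝ) →ₗ[ℝ] (Fin 5 → ℝ) where
  toFun := glAct a b c d
  map_add' x y := by funext i; fin_cases i <;> simp [glAct] <;> ring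
  map_smul' t x := by funext i; fin_cases i <;> simp [glAct] <;> ring

@[simp] lemma glLM_apply (a b c d : ℝ) (v : Fin 5 → ℝ) :
    glLM a b c d v = glAct a b c d v := rfl

noncomputable def glE (a b c d : ℝ) (h : a * d - b * c ≠ 0) :
    (Fin 5 → ℝ) ≃ₗ[ℝ] (Fin 5 → ℝ) :=
  LinearEquiv.ofLinear (glLM a b c d)
    (glLM (d / (a * d - b * c)) (-b / (a * d - b * c))
          (-c / (a * d - b * c)) (a / (a * d - b * c)))
    (by
      apply LinearMap.ext; intro v; funext i
      set D := a * d - b * c with hD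
      fin_cases i <;> simp [glAct] <;> field_simp <;> rw [hD] <;> ring)
    (by
      apply LinearMap.ext; intro v; funext i
      set D := a * d - b * c with hD
      fin_cases i <;> simp [glAct] <;> field_simp <;> rw [hD] <;> ring)

@[simp] lemma glE_apply (a b c d : ℝ) (h : a * d - b * c ≠ 0) (v : Fin 5 → ℝ) :
    glE a b c d h v = glAct a b c d v := rfl

lemma rhoE_mem (s1 s2 s3 : ℝ) : rhoE s1 s2 s3 ∈ Subgroup.closure P1gens :=
  Subgroup.subset_closure (Or.inl ⟨s1, s2, s3, fun _ => rfl⟩)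

lemma glE_mem (a b c d : ℝ) (h : a * d - b * c ≠ 0) :
    glE a b c d h ∈ Subgroup.closure P1gens :=
  Subgroup.subset_closure (Or.inr ⟨a, b, c, d, h, fun _ => rfl⟩)

lemma mul_apply' (f g : (Fin 5 → ℝ) ≃ₗ[ℝ] (Fin 5 → ℝ)) (v : Fin 5 → ℝ) :
    (f * g) v = f (g v) := rfl

/-- Under the P₁-action: every nonzero vector with v₄ = v₅ = 0 and v₃ ≠ 0 can be
mapped to e₃ = (0,0,1,0,0), and every nonzero vector with v₃ = v₄ = v₅ = 0 can be
mapped to e₁ = (1,0,0,0,0). -/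
theorem lower_orbits_normal_forms :
    (∀ v : Fin 5 → ℝ, v ≠ 0 → v 3 = 0 → v 4 = 0 → v 2 ≠ 0 →
      ∃ f ∈ Subgroup.closure P1gens, f v = ![0, 0, 1, 0, 0]) ∧
    (∀ v : Fin 5 → ℝ, v ≠ 0 → v 2 = 0 → v 3 = 0 → v 4 = 0 →
      ∃ f ∈ Subgroup.closure P1gens, f v = ![1, 0, 0, 0, 0]) := by
  constructor
  · intro v _ h3 h4 h2
    have hdet : (1 : ℝ) * (1 / v 2) - 0 * 0 ≠ 0 := by
      simp [h2]
    refine ⟨glE 1 0 0 (1 / v 2) hdet * rhoE (-(v 1) / v 2) (v 0 / v 2) 0,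
      (Subgroup.closure P1gens).mul_mem (glE_mem _ _ _ _ _) (rhoE_mem _ _ _), ?_⟩
    rw [mul_apply']
    funext i
    fin_cases i <;> simp [rhoAct, glAct, h3, h4] <;> field_simp <;> simp
  · intro v hv h2 h3 h4
    rcases eq_or_ne (v 0) 0 with h0 | h0
    · have h1 : v 1 ≠ 0 := by
        intro h1
        apply hv
        funext i
        fin_cases i <;> simp [h0, h1, h2, h3, h4]
      have hdet : (0 : ℝ) * 0 - (1 / v 1) * (-(v 1)) ≠ 0 := by
        field_simp <;> norm_num
      refine ⟨glE 0 (1 / v 1) (-(v 1)) 0 hdet, glE_mem _ _ _ _ _, ?_⟩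
      funext i
      fin_cases i <;> simp [glAct, h0, h2, h3, h4] <;> (try field_simp) <;> (try ring)
    · have hdet : (1 / v 0) * v 0 - 0 * (-(v 1)) ≠ 0 := by
        field_simp <;> norm_num
      refine ⟨glE (1 / v 0) 0 (-(v 1)) (v 0) hdet, glE_mem _ _ _ _ _, ?_⟩
      funext i
      fin_cases i <;> simp [glAct, h2, h3, h4] <;> (try field_simp) <;> (try ring)
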